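/- Let M be a complete metric space with base point 0, and let u, v ∈ M and r, s, δ > 0 with r + s < d(u,v) be such that [u,v]_δ ⊆ B(u,r) ∪ B(v,s). Then there exist x ∈ B(u,r) and y ∈ B(v,s) with x ≠ y such that the molecule m_{xy} is a denting point of B_{F(M)} and d(u,x) + d(v,y) + d(x,y) < d(u,v) + δ. -/

import Mathlib

open Metric Set Filter NNReal

noncomputable section

/-- The topological dual of a normed space, with the norm topology on `E`
(the former Mathlib `NormedSpace.Dual`, removed from Mathlib). -/
abbrev NormedSpace.Dual (𝕜 : Type*) (E : Type*) [NontriviallyNormedField 𝕜]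
    [SeminormedAddCommGroup E] [NormedSpace 𝕜 E] : Type _ :=
  E →L[𝕜] 𝕜

namespace DeltaPaper

/-! ### Generic Banach space notions -/

variable {X : Type*} [NormedAddCommGroup X] [NormedSpace ℝ X]

/-- `x` is a Daugavet-point: every slice of the unit ball contains, for every `ε > 0`,
an element at distance at least `2 - ε` from `x`. -/
def IsDaugavetPoint (x : X) : Prop :=
  ∀ (φ : NormedSpace.Dual ℝ X) (α : ℝ), ‖φ‖ = 1 → 0 < α → ∀ ε > 0,
    ∃ y : X, ‖y‖ ≤ 1 ∧ 1 - α < φ y ∧ 2 - ε ≤ ‖x - y‖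

/-- `x` is a Δ-point: every slice of the unit ball containing `x` contains, for every
`ε > 0`, an element at distance at least `2 - ε` from `x`. -/
def IsDeltaPoint (x : X) : Prop :=
  ∀ (φ : NormedSpace.Dual ℝ X) (α : ℝ), ‖φ‖ = 1 → 0 < α → 1 - α < φ x → ∀ ε > 0,
    ∃ y : X, ‖y‖ ≤ 1 ∧ 1 - α < φ y ∧ 2 - ε ≤ ‖x - y‖

/-- `x*` is a w*-Daugavet-point of the dual of `X`. -/
def IsWeakStarDaugavetPoint (f : NormedSpace.Dual ℝ X) : Prop :=
  ∀ (x : X) (α : ℝ), ‖x‖ = 1 → 0 < α → ∀ ε > 0,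
    ∃ g : NormedSpace.Dual ℝ X, ‖g‖ ≤ 1 ∧ 1 - α < g x ∧ 2 - ε ≤ ‖f - g‖

/-- `x*` is a w*-Δ-point of the dual of `X`. -/
def IsWeakStarDeltaPoint (f : NormedSpace.Dual ℝ X) : Prop :=
  ∀ (x : X) (α : ℝ), ‖x‖ = 1 → 0 < α → 1 - α < f x → ∀ ε > 0,
    ∃ g : NormedSpace.Dual ℝ X, ‖g‖ ≤ 1 ∧ 1 - α < g x ∧ 2 - ε ≤ ‖f - g‖

/-- `x` is a denting point of the unit ball: it lies in slices of the unit ball of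
arbitrarily small diameter. -/
def IsDentingPoint (x : X) : Prop :=
  ‖x‖ ≤ 1 ∧ ∀ ε > 0, ∃ (φ : NormedSpace.Dual ℝ X) (α : ℝ), ‖φ‖ = 1 ∧ 0 < α ∧
    1 - α < φ x ∧ Metric.diam {y : X | ‖y‖ ≤ 1 ∧ 1 - α < φ y} < ε

/-- The Kuratowski measure of non-compactness of a set: the infimum of all `ε > 0`
such that the set can be covered by finitely many sets of diameter less than `ε`. -/
def kuratowski {Y : Type*} [PseudoMetricSpace Y] (A : Set Y) : ℝ :=
  sInf {ε : ℝ | 0 < ε ∧ ∃ 𝒞 : Finset (Set Y), (A ⊆ ⋃ B ∈ 𝒞, B) ∧ ∀ B ∈ 𝒞, Metric.diam B < ε}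

/-! ### The space of Lipschitz functions vanishing at a base point -/

variable {M : Type*} [PseudoMetricSpace M]

/-- The least Lipschitz constant of a function. -/
def lipConst (f : M → ℝ) : ℝ≥0 := sInf {K | LipschitzWith K f}

theorem lipschitzWith_lipConst {f : M → ℝ} (hf : ∃ K, LipschitzWith K f) :
    LipschitzWith (lipConst f) f := by
  obtain ⟨K₀, hK₀⟩ := hf
  rw [lipschitzWith_iff_dist_le_mul]
  intro x y
  rcases le_or_gt (dist x y) 0 with h | h
  · have h0 : dist x y = 0 := le_antisymm h dist_nonneg
    have := hK₀.dist_le_mul x y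
    rw [h0, mul_zero] at this ⊢
    exact this
  · rw [← div_le_iff₀ h]
    have hnn : 0 ≤ dist (f x) (f y) / dist x y := by positivity
    rw [← Real.coe_toNNReal _ hnn, NNReal.coe_le_coe]
    refine le_csInf ⟨K₀, hK₀⟩ ?_
    intro K hK
    rw [← NNReal.coe_le_coe, Real.coe_toNNReal _ hnn, div_le_iff₀ h]
    exact hK.dist_le_mul x y

theorem lipConst_le {f : M → ℝ} {K : ℝ≥0} (hK : LipschitzWith K f) : lipConst f ≤ K :=
  csInf_le (OrderBot.bddBelow _) hK

theorem lipschitzWith_smul {f : M → ℝ} {K : ℝ≥0} (hK : LipschitzWith K f) (c : ℝ) :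
    LipschitzWith (‖c‖₊ * K) (c • f) := by
  rw [lipschitzWith_iff_dist_le_mul] at *
  intro x y
  have : dist ((c • f) x) ((c • f) y) = ‖c‖ * dist (f x) (f y) := by
    simp only [Pi.smul_apply, smul_eq_mul, Real.dist_eq, ← mul_sub, abs_mul, Real.norm_eq_abs]
  rw [this, NNReal.coe_mul, coe_nnnorm, mul_assoc]
  exact mul_le_mul_of_nonneg_left (hK x y) (norm_nonneg c)

variable (M) in
/-- The submodule of `M → ℝ` consisting of Lipschitz functions vanishing at the
base point `z`. -/
def Lip0 (z : M) : Submodule ℝ (M → ℝ) where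
  carrier := {f | (∃ K, LipschitzWith K f) ∧ f z = 0}
  add_mem' := by
    rintro f g ⟨⟨K, hK⟩, hf0⟩ ⟨⟨L, hL⟩, hg0⟩
    exact ⟨⟨K + L, hK.add hL⟩, by simp [hf0, hg0]⟩
  zero_mem' := ⟨⟨0, LipschitzWith.const' 0⟩, rfl⟩
  smul_mem' := by
    rintro c f ⟨⟨K, hK⟩, hf0⟩
    exact ⟨⟨‖c‖₊ * K, lipschitzWith_smul hK c⟩, by simp [hf0]⟩

variable {z : M}

instance : NormedAddCommGroup ↥(Lip0 M z) :=
  AddGroupNorm.toNormedAddCommGroup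
    { toFun := fun f => ((lipConst (f : M → ℝ) : ℝ≥0) : ℝ)
      map_zero' := by
        have h0 : lipConst (0 : M → ℝ) = 0 :=
          le_antisymm (lipConst_le (by simpa using LipschitzWith.const' (0 : ℝ))) bot_le
        show ((lipConst ((0 : ↥(Lip0 M z)) : M → ℝ) : ℝ≥0) : ℝ) = 0
        rw [show ((0 : ↥(Lip0 M z)) : M → ℝ) = 0 from rfl, h0, NNReal.coe_zero]
      add_le' := by
        intro f g
        have hf := lipschitzWith_lipConst f.2.1
        have hg := lipschitzWith_lipConst g.2.1
        have : lipConst ((f + g : ↥(Lip0 M z)) : M → ℝ) ≤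
            lipConst (f : M → ℝ) + lipConst (g : M → ℝ) := by
          refine lipConst_le ?_
          have := hf.add hg
          convert this using 1 <;> rfl
        exact_mod_cast this
      neg' := by
        intro f
        show ((lipConst ((-f : ↥(Lip0 M z)) : M → ℝ) : ℝ≥0) : ℝ) = _
        rw [show ((-f : ↥(Lip0 M z)) : M → ℝ) = -(f : M → ℝ) from rfl]
        unfold lipConst
        congr 2
        ext K
        exact ⟨fun hK => by simpa using hK.neg, fun hK => hK.neg⟩
      eq_zero_of_map_eq_zero' := by
        intro f hf
        replace hf : ((lipConst (f : M → ℝ) : ℝ≥0) : ℝ) = 0 := hf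
        have h0 : lipConst (f : M → ℝ) = 0 := by exact_mod_cast hf
        have hl : LipschitzWith 0 (f : M → ℝ) := h0 ▸ lipschitzWith_lipConst f.2.1
        ext x
        have := hl.dist_le_mul x z
        simp only [NNReal.coe_zero, zero_mul] at this
        have hxz : (f : M → ℝ) x = (f : M → ℝ) z :=
          dist_le_zero.mp this
        simpa [f.2.2] using hxz }

theorem Lip0.norm_def (f : ↥(Lip0 M z)) : ‖f‖ = ((lipConst (f : M → ℝ) : ℝ≥0) : ℝ) := rfl

theorem Lip0.lipschitzWith (f : ↥(Lip0 M z)) : LipschitzWith (lipConst (f : M → ℝ)) (f : M → ℝ) :=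
  lipschitzWith_lipConst f.2.1

instance : NormedSpace ℝ ↥(Lip0 M z) where
  norm_smul_le c f := by
    have : lipConst ((c • f : ↥(Lip0 M z)) : M → ℝ) ≤ ‖c‖₊ * lipConst (f : M → ℝ) :=
      lipConst_le (lipschitzWith_smul (Lip0.lipschitzWith f) c)
    calc ‖c • f‖ = ((lipConst ((c • f : ↥(Lip0 M z)) : M → ℝ) : ℝ≥0) : ℝ) := rfl
      _ ≤ ((‖c‖₊ * lipConst (f : M → ℝ) : ℝ≥0) : ℝ) := by exact_mod_cast this
      _ = ‖c‖ * ‖f‖ := by push_cast [Lip0.norm_def]; rfl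

variable (M z) in
/-- The evaluation functional `δ_x ∈ Lip₀(M)*`. -/
def evalδ (x : M) : NormedSpace.Dual ℝ ↥(Lip0 M z) :=
  LinearMap.mkContinuous
    { toFun := fun f => (f : M → ℝ) x
      map_add' := fun f g => rfl
      map_smul' := fun c f => rfl }
    (dist x z)
    (by
      intro f
      have := (Lip0.lipschitzWith f).dist_le_mul x z
      simp only [f.2.2, Real.dist_eq, sub_zero] at this
      calc ‖(f : M → ℝ) x‖ = |(f : M → ℝ) x - 0| := by simp
        _ ≤ (lipConst (f : M → ℝ) : ℝ) * dist x z := by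
            simpa [f.2.2, Real.dist_eq] using (Lip0.lipschitzWith f).dist_le_mul x z
        _ = dist x z * ‖f‖ := by rw [Lip0.norm_def, mul_comm])

variable (M z) in
/-- The Lipschitz-free space over `M`: the closed linear span of the evaluation
functionals inside `Lip₀(M)*`. -/
def FreeSpace : Submodule ℝ (NormedSpace.Dual ℝ ↥(Lip0 M z)) :=
  (Submodule.span ℝ (Set.range (evalδ M z))).topologicalClosure

variable (M z) in
/-- The molecule `m_{x y} = (δ_x - δ_y)/d(x,y)` as an element of `Lip₀(M)*`. -/
def molecule (x y : M) : NormedSpace.Dual ℝ ↥(Lip0 M z) :=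
  (dist x y)⁻¹ • (evalδ M z x - evalδ M z y)

theorem molecule_mem_freeSpace (x y : M) : molecule M z x y ∈ FreeSpace M z :=
  Submodule.le_topologicalClosure _
    (Submodule.smul_mem _ _ (Submodule.sub_mem _
      (Submodule.subset_span ⟨x, rfl⟩) (Submodule.subset_span ⟨y, rfl⟩)))

variable (M z) in
/-- The molecule `m_{x y}` as an element of the free space `F(M)`. -/
def mol (x y : M) : ↥(FreeSpace M z) := ⟨molecule M z x y, molecule_mem_freeSpace x y⟩

variable (M) in
/-- A metric space is uniformly discrete if distances between distinct points are
bounded below by a positive constant. -/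
def UniformlyDiscrete : Prop := ∃ θ > (0:ℝ), ∀ x y : M, x ≠ y → θ ≤ dist x y

/-- A norm-one Lipschitz function is local if its Lipschitz constant is approximated
on pairs of arbitrarily close points. -/
def IsLocal (f : ↥(Lip0 M z)) : Prop :=
  ∀ ε > 0, ∃ u v : M, u ≠ v ∧
    ‖f‖ - ε < ((f : M → ℝ) u - (f : M → ℝ) v) / dist u v ∧ dist u v < ε

/-- `f ∈ S_{Lip₀(M)}` is a w*-Daugavet-point: for every w*-slice `S(μ, α)` of
`B_{Lip₀(M)}` (`μ` a norm-one element of `F(M)`) and every `ε > 0` there is `g` in the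
slice with `‖f - g‖ ≥ 2 - ε`. -/
def IsLipWeakStarDaugavetPoint (f : ↥(Lip0 M z)) : Prop :=
  ∀ μ : NormedSpace.Dual ℝ ↥(Lip0 M z), μ ∈ FreeSpace M z → ‖μ‖ = 1 → ∀ α > (0:ℝ), ∀ ε > (0:ℝ),
    ∃ g : ↥(Lip0 M z), ‖g‖ ≤ 1 ∧ 1 - α < μ g ∧ 2 - ε ≤ ‖f - g‖

/-- `f ∈ S_{Lip₀(M)}` is a w*-Δ-point: the same as above, but only for w*-slices
containing `f`. -/
def IsLipWeakStarDeltaPoint (f : ↥(Lip0 M z)) : Prop :=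
  ∀ μ : NormedSpace.Dual ℝ ↥(Lip0 M z), μ ∈ FreeSpace M z → ‖μ‖ = 1 → ∀ α > (0:ℝ),
    1 - α < μ f → ∀ ε > (0:ℝ),
    ∃ g : ↥(Lip0 M z), ‖g‖ ≤ 1 ∧ 1 - α < μ g ∧ 2 - ε ≤ ‖f - g‖

end DeltaPaper

open DeltaPaper NormedSpace Metric


namespace DeltaPaper

variable {M : Type*} [PseudoMetricSpace M] {z : M}

theorem Lip0.norm_le_of_forall {f : ↥(Lip0 M z)} {B : ℝ} (hB : 0 ≤ B)
    (h : ∀ p q : M, (f : M → ℝ) p - (f : M → ℝ) q ≤ B * dist p q) : ‖f‖ ≤ B := by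
  have hlip : LipschitzWith B.toNNReal (f : M → ℝ) := by
    rw [lipschitzWith_iff_dist_le_mul]
    intro p q
    rw [Real.dist_eq, Real.coe_toNNReal _ hB, abs_sub_le_iff]
    constructor
    · exact h p q
    · have := h q p
      rw [dist_comm] at this
      exact this
  have := lipConst_le hlip
  rw [Lip0.norm_def]
  calc ((lipConst (f : M → ℝ) : ℝ≥0) : ℝ) ≤ ((B.toNNReal : ℝ≥0) : ℝ) := by exact_mod_cast this
    _ = B := Real.coe_toNNReal _ hB

theorem Lip0.dist_bound (f : ↥(Lip0 M z)) (p q : M) :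
    (f : M → ℝ) p - (f : M → ℝ) q ≤ ‖f‖ * dist p q := by
  have := (Lip0.lipschitzWith f).dist_le_mul p q
  rw [Real.dist_eq] at this
  have h2 := abs_sub_abs_le_abs_sub ((f : M → ℝ) p) ((f : M → ℝ) q)
  have h3 : (f : M → ℝ) p - (f : M → ℝ) q ≤ |(f : M → ℝ) p - (f : M → ℝ) q| := le_abs_self _
  rw [Lip0.norm_def]
  linarith

theorem evalδ_apply (x : M) (f : ↥(Lip0 M z)) : evalδ M z x f = (f : M → ℝ) x := rfl

theorem molecule_apply (x y : M) (f : ↥(Lip0 M z)) :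
    molecule M z x y f = (dist x y)⁻¹ * ((f : M → ℝ) x - (f : M → ℝ) y) := rfl

theorem norm_molecule_le (x y : M) : ‖molecule M z x y‖ ≤ 1 := by
  rcases eq_or_ne (dist x y) 0 with hd | hd
  · have : ‖molecule M z x y‖ ≤ |(dist x y)⁻¹| * ‖evalδ M z x - evalδ M z y‖ := by
      rw [molecule]
      exact (_root_.norm_smul_le (dist x y)⁻¹ (evalδ M z x - evalδ M z y)).trans (by rw [Real.norm_eq_abs])
    rw [hd] at this
    simpa using this.trans (by simp)
  · have hsub : ‖evalδ M z x - evalδ M z y‖ ≤ dist x y := by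
      apply ContinuousLinearMap.opNorm_le_bound _ dist_nonneg
      intro f
      have h1 : (evalδ M z x - evalδ M z y) f = (f : M → ℝ) x - (f : M → ℝ) y := rfl
      rw [h1, Real.norm_eq_abs, abs_sub_le_iff]
      constructor
      · have := Lip0.dist_bound f x y
        nlinarith [norm_nonneg f, dist_nonneg (x := x) (y := y)]
      · have := Lip0.dist_bound f y x
        rw [dist_comm y x] at this
        nlinarith [norm_nonneg f, dist_nonneg (x := x) (y := y)]
    have h0 : (0:ℝ) ≤ dist x y := dist_nonneg
    have hpos : 0 < dist x y := lt_of_le_of_ne h0 (Ne.symm hd)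
    calc ‖molecule M z x y‖ ≤ |(dist x y)⁻¹| * ‖evalδ M z x - evalδ M z y‖ := by
          rw [molecule]
          exact (_root_.norm_smul_le (dist x y)⁻¹ (evalδ M z x - evalδ M z y)).trans (by rw [Real.norm_eq_abs])
      _ ≤ |(dist x y)⁻¹| * dist x y := by
          apply mul_le_mul_of_nonneg_left hsub (abs_nonneg _)
      _ = 1 := by
          rw [abs_of_nonneg (by positivity), inv_mul_cancel₀ (ne_of_gt hpos)]

end DeltaPaper

open DeltaPaper NormedSpace Metric

section EkelandNonZ

open Filter Topology Metric

theorem my_ekeland {X : Type*} [MetricSpace X] [CompleteSpace X]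
    (F : X → ℝ) (hF : Continuous F) (h0 : ∀ a, 0 ≤ F a) (x₀ : X) :
    ∃ w, F w ≤ F x₀ ∧ ∀ z, F w ≤ F z + (1/2) * dist z w := by
  classical
  set S : X → Set X := fun x => {z | F z + (1/2) * dist z x ≤ F x} with hS
  have hSself : ∀ x, x ∈ S x := by
    intro x; simp [hS]
  have hne : ∀ x, (F '' S x).Nonempty := fun x => ⟨F x, x, hSself x, rfl⟩
  have hbdd : ∀ x, BddBelow (F '' S x) := by
    rintro x
    exact ⟨0, by rintro _ ⟨a, _, rfl⟩; exact h0 a⟩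
  have hstep : ∀ (x : X) (n : ℕ), ∃ x', x' ∈ S x ∧ F x' ≤ sInf (F '' S x) + (1/2)^n := by
    intro x n
    have hlt : sInf (F '' S x) < sInf (F '' S x) + (1/2)^n := by
      have : (0:ℝ) < (1/2)^n := by positivity
      linarith
    obtain ⟨b, hb, hb2⟩ := exists_lt_of_csInf_lt (hne x) hlt
    obtain ⟨a, ha, rfl⟩ := hb
    exact ⟨a, ha, le_of_lt hb2⟩
  set g : ℕ → X := fun n => Nat.rec x₀ (fun n xn => Classical.choose (hstep xn n)) n with hg
  have hgsucc : ∀ n, g (n+1) ∈ S (g n) ∧ F (g (n+1)) ≤ sInf (F '' S (g n)) + (1/2)^n := by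
    intro n
    exact Classical.choose_spec (hstep (g n) n)
  have hdec : ∀ n, F (g (n+1)) + (1/2) * dist (g (n+1)) (g n) ≤ F (g n) := fun n => (hgsucc n).1
  have hanti : ∀ {n m}, n ≤ m → F (g m) ≤ F (g n) := by
    intro n m h
    induction m, h using Nat.le_induction with
    | base => exact le_refl _
    | succ m' hm ih =>
      have := hdec m'
      have hd : (0:ℝ) ≤ (1/2) * dist (g (m'+1)) (g m') := by positivity
      linarith
  have hdist : ∀ n m, n ≤ m → (1/2) * dist (g n) (g m) ≤ F (g n) - F (g m) := by
    intro n m h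
    induction m, h using Nat.le_induction with
    | base => simp
    | succ m' hm ih =>
      have h1 := hdec m'
      have h2 : dist (g n) (g (m'+1)) ≤ dist (g n) (g m') + dist (g (m'+1)) (g m') := by
        rw [dist_comm (g (m'+1)) (g m')]
        exact dist_triangle _ _ _
      have h3 : (0:ℝ) ≤ dist (g n) (g m') := dist_nonneg
      nlinarith
  -- limit of F ∘ g
  have hFanti : Antitone (fun n => F (g n)) := antitone_nat_of_succ_le (fun n => hanti (Nat.le_succ n))
  have hbdd2 : BddBelow (Set.range fun n => F (g n)) := ⟨0, by rintro _ ⟨n, rfl⟩; exact h0 _⟩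
  set L : ℝ := ⨅ n, F (g n) with hL
  have htend : Tendsto (fun n => F (g n)) atTop (𝓝 L) :=
    tendsto_atTop_ciInf hFanti hbdd2
  have hLle : ∀ n, L ≤ F (g n) := fun n => ciInf_le hbdd2 n
  have hcauchy : CauchySeq g := by
    apply cauchySeq_of_le_tendsto_0 (b := fun N => 2 * (F (g N) - L))
    · intro n m N hn hm
      rcases le_total n m with h | h
      · have := hdist n m h
        have h1 := hanti hn
        have h2 := hLle m
        nlinarith
      · have := hdist m n h
        have h1 := hanti hm
        have h2 := hLle n
        rw [dist_comm]
        nlinarith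
    · have : Tendsto (fun N => 2 * (F (g N) - L)) atTop (𝓝 (2 * (L - L))) :=
        (htend.sub_const L).const_mul 2
      simpa using this
  obtain ⟨w, hw⟩ := cauchySeq_tendsto_of_complete hcauchy
  have hFw : F w = L := by
    have : Tendsto (fun n => F (g n)) atTop (𝓝 (F w)) := (hF.tendsto w).comp hw
    exact tendsto_nhds_unique this htend
  refine ⟨w, ?_, ?_⟩
  · have : L ≤ F (g 0) := hLle 0
    rw [hFw]; exact this
  · intro z
    by_contra hcon
    push_neg at hcon
    -- hcon : F z + 1/2 * dist z w < F w
    have hev : ∀ᶠ n in atTop, F z + (1/2) * dist z (g n) < L := by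
      have htz : Tendsto (fun n => F z + (1/2) * dist z (g n)) atTop
          (𝓝 (F z + (1/2) * dist z w)) := by
        have : Tendsto (fun n => dist z (g n)) atTop (𝓝 (dist z w)) :=
          (Continuous.dist continuous_const continuous_id).continuousAt.tendsto.comp hw
        exact (this.const_mul (1/2)).const_add (F z)
      have : F z + (1/2) * dist z w < L := by rw [← hFw]; exact hcon
      exact htz.eventually_lt_const this
    have hLz : ∀ᶠ n in atTop, L ≤ F z + (1/2)^n := by
      filter_upwards [hev] with n hn
      have hzS : z ∈ S (g n) := le_of_lt (lt_of_lt_of_le hn (hLle n))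
      have : sInf (F '' S (g n)) ≤ F z := csInf_le (hbdd _) ⟨z, hzS, rfl⟩
      have h2 := (hgsucc n).2
      have := hLle (n+1)
      linarith
    have hLz2 : L ≤ F z := by
      have hpow : Tendsto (fun n : ℕ => F z + (1/2 : ℝ)^n) atTop (𝓝 (F z + 0)) := by
        exact (_root_.tendsto_pow_atTop_nhds_zero_of_lt_one (by norm_num) (by norm_num)).const_add (F z)
      rw [add_zero] at hpow
      exact ge_of_tendsto hpow hLz
    have : F z + (1/2) * dist z w < F z := lt_of_lt_of_le (by rw [← hFw] at *; exact hcon) hLz2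
    have hd : (0:ℝ) ≤ dist z w := dist_nonneg
    nlinarith

set_option maxHeartbeats 2000000 in
theorem exists_nonZ_pair {M : Type*} [MetricSpace M] [CompleteSpace M]
    (u v : M) (r s δ : ℝ) (hr : 0 < r) (hs : 0 < s) (hδ : 0 < δ)
    (hrs : r + s < dist u v)
    (hseg : {p : M | dist u p + dist v p < dist u v + δ} ⊆
      closedBall u r ∪ closedBall v s) :
    ∃ x ∈ closedBall u r, ∃ y ∈ closedBall v s, x ≠ y ∧
      dist u x + dist v y + dist x y < dist u v + δ ∧
      ∃ θ : ℝ, 0 < θ ∧ θ ≤ 1/2 ∧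
        ∀ p : M, θ * min (dist p x) (dist p y) ≤ dist p x + dist p y - dist x y := by
  classical
  set D : ℝ := dist u v with hD
  have hD0 : 0 < D := lt_of_le_of_lt (by positivity) hrs
  set Λ : ℝ := max 1 (4*(r+s)/δ) with hΛ
  have hΛ1 : (1:ℝ) ≤ Λ := le_max_left _ _
  have hΛ0 : (0:ℝ) < Λ := lt_of_lt_of_le one_pos hΛ1
  have hΛrs : (r+s)/Λ ≤ δ/4 := by
    rw [div_le_iff₀ hΛ0]
    have h4 : 4*(r+s)/δ ≤ Λ := le_max_right _ _
    rw [div_le_iff₀ hδ] at h4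
    nlinarith
  set P : Set (M × M) := {ab | dist u ab.1 ≤ r ∧ dist v ab.2 ≤ s ∧
      dist u ab.1 + dist ab.1 ab.2 + dist ab.2 v ≤ D + δ/2} with hP
  have hPclosed : IsClosed P := by
    have h1 : IsClosed {ab : M × M | dist u ab.1 ≤ r} :=
      isClosed_le (by fun_prop) continuous_const
    have h2 : IsClosed {ab : M × M | dist v ab.2 ≤ s} :=
      isClosed_le (by fun_prop) continuous_const
    have h3 : IsClosed {ab : M × M | dist u ab.1 + dist ab.1 ab.2 + dist ab.2 v ≤ D + δ/2} :=
      isClosed_le (by fun_prop) continuous_const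
    have : P = {ab : M × M | dist u ab.1 ≤ r} ∩ ({ab : M × M | dist v ab.2 ≤ s} ∩
        {ab : M × M | dist u ab.1 + dist ab.1 ab.2 + dist ab.2 v ≤ D + δ/2}) := by
      ext ab; simp [hP, Set.mem_setOf_eq, and_assoc]
    rw [this]
    exact h1.inter (h2.inter h3)
  haveI : CompleteSpace ↥P := hPclosed.completeSpace_coe
  set F : ↥P → ℝ := fun ab =>
    dist ab.val.1 ab.val.2 + Λ * (dist u ab.val.1 + dist ab.val.1 ab.val.2 + dist ab.val.2 v)
    with hF
  have hFc : Continuous F := by fun_prop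
  have hF0 : ∀ a, 0 ≤ F a := by
    intro a
    have d1 : (0:ℝ) ≤ dist a.val.1 a.val.2 := dist_nonneg
    have d2 : (0:ℝ) ≤ dist u a.val.1 := dist_nonneg
    have d3 : (0:ℝ) ≤ dist a.val.2 v := dist_nonneg
    simp only [hF]
    nlinarith
  have huvP : (u, v) ∈ P := by
    refine ⟨by simp [hr.le], by simp [hs.le], ?_⟩
    simp only [dist_self]
    rw [← hD]
    nlinarith
  obtain ⟨w, hw1, hw2⟩ := my_ekeland F hFc hF0 ⟨(u,v), huvP⟩
  obtain ⟨⟨x, y⟩, hxyP⟩ := w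
  obtain ⟨hux, hvy, hbud⟩ := hxyP
  set d' : ℝ := dist x y with hd'
  have hxy_lb : D - r - s ≤ d' := by
    have h1 : D ≤ dist u x + dist x y + dist y v := by
      calc D ≤ dist u x + dist x v := dist_triangle u x v
        _ ≤ dist u x + (dist x y + dist y v) := by
            have := dist_triangle x y v; linarith
        _ = dist u x + dist x y + dist y v := by ring
    have h2 : dist y v ≤ s := by rw [dist_comm]; exact hvy
    linarith
  have hd'0 : 0 < d' := by linarith
  have hFw1 : F ⟨(x,y), ⟨hux, hvy, hbud⟩⟩ ≤ (1+Λ) * D := by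
    have := hw1
    simp only [hF, dist_self] at this ⊢
    rw [← hD] at this
    nlinarith
  have hbud4 : dist u x + dist x y + dist y v ≤ D + δ/4 := by
    have hfw : d' + Λ * (dist u x + d' + dist y v) ≤ (1+Λ)*D := hFw1
    have h2 : dist y v ≤ s := by rw [dist_comm]; exact hvy
    have h3 : D ≤ dist u x + d' + dist y v := by
      calc D ≤ dist u x + dist x v := dist_triangle u x v
        _ ≤ dist u x + (dist x y + dist y v) := by
            have := dist_triangle x y v; linarith
        _ = dist u x + d' + dist y v := by rw [hd']; ring
    -- Λ * budget ≤ Λ*D + (D - d') ≤ Λ*D + (r+s)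
    have h4 : Λ * (dist u x + d' + dist y v) ≤ Λ*D + (D - d') := by nlinarith
    have h5 : D - d' ≤ r + s := by linarith
    have h6 : dist u x + d' + dist y v ≤ D + (r+s)/Λ := by
      have h7 : Λ * (dist u x + d' + dist y v - D) ≤ r + s := by nlinarith
      have h8 : dist u x + d' + dist y v - D ≤ (r+s)/Λ := by
        rw [le_div_iff₀ hΛ0]; nlinarith
      linarith
    linarith
  set c : ℝ := 1/(2*(1+Λ)) with hc
  have hc0 : 0 < c := by positivity
  have hc1 : c * (2*(1+Λ)) = 1 := by
    rw [hc]; field_simp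
  have htri_e : ∀ p : M, 0 ≤ dist p x + dist p y - d' := by
    intro p
    have h := dist_triangle x p y
    rw [dist_comm x p] at h
    rw [hd']
    linarith
  have hkey : ∀ p : M, dist p x + dist p y - d' < δ/4 →
      c * min (dist p x) (dist p y) ≤ dist p x + dist p y - d' := by
    intro p hp
    have he0 := htri_e p
    have hyv : dist v y = dist y v := dist_comm v y
    have hup : dist u p ≤ dist u x + dist p x := by
      have := dist_triangle u x p; rw [dist_comm x p] at this; linarith
    have hvp : dist v p ≤ dist v y + dist p y := by
      have := dist_triangle v y p; rw [dist_comm y p] at this; linarith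
    have hpu : dist u p + dist v p < D + δ := by
      have hb := hbud4
      linarith
    have hminx : min (dist p x) (dist p y) ≤ dist p x := min_le_left _ _
    have hminy : min (dist p x) (dist p y) ≤ dist p y := min_le_right _ _
    rcases hseg hpu with hcase | hcase
    · -- p ∈ closedBall u r : test the pair (p, y)
      rw [mem_closedBall] at hcase
      have hpleg : (p, y) ∈ P := by
        refine ⟨by rw [dist_comm]; exact hcase, hvy, ?_⟩
        have hb := hbud4
        show dist u p + dist p y + dist y v ≤ D + δ/2
        linarith
      have hEk := hw2 ⟨(p,y), hpleg⟩
      have hdd : dist (⟨(p,y),hpleg⟩ : ↥P) (⟨(x,y), ⟨hux, hvy, hbud⟩⟩ : ↥P) = dist p x := by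
        rw [Subtype.dist_eq, Prod.dist_eq]
        simp [dist_self, dist_nonneg]
      rw [hdd] at hEk
      simp only [hF] at hEk
      have hEk2 : d' + Λ * (dist u x + d' + dist y v) ≤
          dist p y + Λ * (dist u p + dist p y + dist y v) + 1/2 * dist p x := hEk
      have hprod : Λ * dist u p ≤ Λ * (dist u x + dist p x) :=
        mul_le_mul_of_nonneg_left hup hΛ0.le
      have hexp1 : Λ * (dist u x + d' + dist y v)
          = Λ * dist u x + Λ * d' + Λ * dist y v := by ring
      have hexp2 : Λ * (dist u p + dist p y + dist y v)
          = Λ * dist u p + Λ * dist p y + Λ * dist y v := by ring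
      have hexp3 : Λ * (dist u x + dist p x) = Λ * dist u x + Λ * dist p x := by ring
      have hexp4 : (1+Λ) * (dist p x + dist p y - d')
          = dist p x + dist p y - d' + (Λ * dist p x + Λ * dist p y - Λ * d') := by ring
      have hmain : 1/2 * dist p x ≤ (1+Λ) * (dist p x + dist p y - d') := by
        rw [hexp4]
        linarith
      have hcpx : c * dist p x ≤ dist p x + dist p y - d' := by
        have h1 := mul_le_mul_of_nonneg_left hmain hc0.le
        have hc2 : c * (1+Λ) = 1/2 := by
          rw [hc]; rw [div_mul_eq_mul_div, one_mul, div_eq_iff (by positivity : (2:ℝ)*(1+Λ) ≠ 0)]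
          ring
        have h3 : c * ((1+Λ) * (dist p x + dist p y - d'))
            = 1/2 * (dist p x + dist p y - d') := by rw [← mul_assoc, hc2]
        have h4 : c * (1/2 * dist p x) = 1/2 * (c * dist p x) := by ring
        rw [h3, h4] at h1
        linarith
      have h2 := mul_le_mul_of_nonneg_left hminx hc0.le
      linarith
    · -- p ∈ closedBall v s : test the pair (x, p)
      rw [mem_closedBall] at hcase
      have hpleg : (x, p) ∈ P := by
        refine ⟨hux, by rw [dist_comm]; exact hcase, ?_⟩
        have hb := hbud4
        have hpv : dist p v ≤ dist p y + dist y v := dist_triangle p y v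
        have hxp : dist x p = dist p x := dist_comm x p
        show dist u x + dist x p + dist p v ≤ D + δ/2
        linarith
      have hEk := hw2 ⟨(x,p), hpleg⟩
      have hdd : dist (⟨(x,p),hpleg⟩ : ↥P) (⟨(x,y), ⟨hux, hvy, hbud⟩⟩ : ↥P) = dist p y := by
        rw [Subtype.dist_eq, Prod.dist_eq]
        simp [dist_self, dist_nonneg, dist_comm p y]
      rw [hdd] at hEk
      simp only [hF] at hEk
      have hEk2 : d' + Λ * (dist u x + d' + dist y v) ≤
          dist x p + Λ * (dist u x + dist x p + dist p v) + 1/2 * dist p y := hEk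
      have hpv : dist p v ≤ dist p y + dist y v := dist_triangle p y v
      have hxp : dist x p = dist p x := dist_comm x p
      have hprod : Λ * dist p v ≤ Λ * (dist p y + dist y v) :=
        mul_le_mul_of_nonneg_left hpv hΛ0.le
      have hexp1 : Λ * (dist u x + d' + dist y v)
          = Λ * dist u x + Λ * d' + Λ * dist y v := by ring
      have hexp2 : Λ * (dist u x + dist x p + dist p v)
          = Λ * dist u x + Λ * dist x p + Λ * dist p v := by ring
      have hexp3 : Λ * (dist p y + dist y v) = Λ * dist p y + Λ * dist y v := by ring
      have hexp4 : (1+Λ) * (dist p x + dist p y - d')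
          = dist p x + dist p y - d' + (Λ * dist p x + Λ * dist p y - Λ * d') := by ring
      have hxp2 : Λ * dist x p = Λ * dist p x := by rw [hxp]
      have hmain : 1/2 * dist p y ≤ (1+Λ) * (dist p x + dist p y - d') := by
        rw [hexp4]
        linarith
      have hcpy : c * dist p y ≤ dist p x + dist p y - d' := by
        have h1 := mul_le_mul_of_nonneg_left hmain hc0.le
        have hc2 : c * (1+Λ) = 1/2 := by
          rw [hc]; rw [div_mul_eq_mul_div, one_mul, div_eq_iff (by positivity : (2:ℝ)*(1+Λ) ≠ 0)]
          ring
        have h3 : c * ((1+Λ) * (dist p x + dist p y - d'))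
            = 1/2 * (dist p x + dist p y - d') := by rw [← mul_assoc, hc2]
        have h4 : c * (1/2 * dist p y) = 1/2 * (c * dist p y) := by ring
        rw [h3, h4] at h1
        linarith
      have h2 := mul_le_mul_of_nonneg_left hminy hc0.le
      linarith
  set γ : ℝ := δ/4 with hγ
  have hγ0 : 0 < γ := by positivity
  set θ2 : ℝ := 2*γ/(γ + d') with hθ2
  have hθ20 : 0 < θ2 := by positivity
  have hθ2id : θ2 * (γ + d') = 2*γ := by
    rw [hθ2]; field_simp
  set θ : ℝ := min (min c θ2) (1/2) with hθ
  have hθ0 : 0 < θ := by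
    apply lt_min (lt_min hc0 hθ20); norm_num
  refine ⟨x, by rw [mem_closedBall, dist_comm]; exact hux,
          y, by rw [mem_closedBall, dist_comm]; exact hvy, ?_, ?_, θ, hθ0, min_le_right _ _, ?_⟩
  · have h := hd'0
    rw [hd'] at h
    exact dist_pos.mp h
  · have hyv : dist v y = dist y v := dist_comm v y
    have hb := hbud4
    linarith
  · intro p
    have he0 := htri_e p
    have hminx : min (dist p x) (dist p y) ≤ dist p x := min_le_left _ _
    have hminy : min (dist p x) (dist p y) ≤ dist p y := min_le_right _ _
    have hmin0 : 0 ≤ min (dist p x) (dist p y) :=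
      le_min dist_nonneg dist_nonneg
    rcases lt_or_ge (dist p x + dist p y - d') (δ/4) with hsmall | hbig
    · have hk := hkey p hsmall
      have hθc : θ ≤ c := le_trans (min_le_left _ _) (min_le_left _ _)
      have := mul_le_mul_of_nonneg_right hθc hmin0
      linarith
    · have hθt2 : θ ≤ θ2 := le_trans (min_le_left _ _) (min_le_right _ _)
      have havg : 2 * min (dist p x) (dist p y) ≤ dist p x + dist p y := by
        rcases min_le_iff.mp (le_refl (min (dist p x) (dist p y))) with h | h <;> linarith
      have hθ2le2 : θ2 ≤ 2 := by
        rw [hθ2, div_le_iff₀ (by linarith : (0:ℝ) < γ + d')]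
        linarith
      have h2min := mul_le_mul_of_nonneg_left havg hθ20.le
      have h3 : θ2 * (dist p x + dist p y)
          = θ2 * (γ + d') + θ2 * ((dist p x + dist p y - d') - γ) := by ring
      have h4 : θ2 * ((dist p x + dist p y - d') - γ)
          ≤ 2 * ((dist p x + dist p y - d') - γ) :=
        mul_le_mul_of_nonneg_right hθ2le2 (by linarith)
      have h5 : θ2 * min (dist p x) (dist p y) ≤ dist p x + dist p y - d' := by
        have h6 : θ2 * (2 * min (dist p x) (dist p y)) = 2 * (θ2 * min (dist p x) (dist p y)) := by
          ring
        linarith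
      have := mul_le_mul_of_nonneg_right hθt2 hmin0
      linarith

end EkelandNonZ


section Denting

variable {M : Type*} [MetricSpace M]

/-- The slicing function used to show that molecules over uniformly non-(Z) pairs
are denting points. -/
noncomputable def F0val (x y : M) (t : ℝ) : M → ℝ := fun p =>
  min (dist x y - (1-2*t)*dist p x)
      ((1-2*t)*dist p y + 4*t*max 0 (dist p y - dist x y/2))

set_option maxHeartbeats 1000000 in
theorem core_cases (x y : M) (θ ρ t : ℝ) (hθ0 : 0 < θ) (hθ1 : θ ≤ 1/2)
    (hρ0 : 0 < ρ) (hρd : ρ ≤ dist x y / 8) (hd0 : 0 < dist x y)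
    (ht : t = θ * ρ / (8 * dist x y))
    (hnz : ∀ p : M, θ * min (dist p x) (dist p y) ≤ dist p x + dist p y - dist x y)
    (p q : M) :
    F0val x y t p - F0val x y t q ≤ (1 - 2*t) * dist p q ∨
      (dist p x ≤ ρ ∧ dist q y ≤ 3*ρ/8 ∧ F0val x y t p - F0val x y t q ≤ dist p q) := by
  have ht0 : 0 < t := by rw [ht]; positivity
  have h8td : 8 * t * dist x y = θ * ρ := by
    rw [ht]; field_simp
  have ht128 : t ≤ 1/128 := by nlinarith
  have hθ4t : 4*t < θ := by nlinarith
  have hdup : dist x y ≤ dist p x + dist p y := by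
    have h := dist_triangle x p y; rw [dist_comm x p] at h; linarith
  have hduq : dist x y ≤ dist q x + dist q y := by
    have h := dist_triangle x q y; rw [dist_comm x q] at h; linarith
  have huu := abs_dist_sub_le p q x
  have hvv := abs_dist_sub_le p q y
  rw [abs_sub_le_iff] at huu hvv
  obtain ⟨huu1, huu2⟩ := huu
  obtain ⟨hvv1, hvv2⟩ := hvv
  have hσ0 : (0:ℝ) ≤ dist p q := dist_nonneg
  have hupx : (0:ℝ) ≤ dist p x := dist_nonneg
  have hvpy : (0:ℝ) ≤ dist p y := dist_nonneg
  have huqx : (0:ℝ) ≤ dist q x := dist_nonneg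
  have hvqy : (0:ℝ) ≤ dist q y := dist_nonneg
  have hnzp := hnz p
  have hnzq := hnz q
  have hKq0 : (0:ℝ) ≤ 4*t*max 0 (dist q y - dist x y/2) := by positivity
  have hKp0 : (0:ℝ) ≤ 4*t*max 0 (dist p y - dist x y/2) := by positivity
  by_cases hCK : dist x y - (1-2*t)*dist q x ≤
      (1-2*t)*dist q y + 4*t*max 0 (dist q y - dist x y/2)
  · left
    have hq : F0val x y t q = dist x y - (1-2*t)*dist q x := min_eq_left hCK
    have hple : F0val x y t p ≤ dist x y - (1-2*t)*dist p x := min_le_left _ _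
    rw [hq]
    have h2 := mul_le_mul_of_nonneg_left huu2 (by linarith : (0:ℝ) ≤ 1-2*t)
    nlinarith
  · push_neg at hCK
    have hq : F0val x y t q = (1-2*t)*dist q y + 4*t*max 0 (dist q y - dist x y/2) :=
      min_eq_right (le_of_lt hCK)
    have heq0 : 0 ≤ dist q x + dist q y - dist x y := by linarith
    have hA : (1-2*t) * (dist q x + dist q y) < dist x y := by nlinarith
    have heq3 : dist q x + dist q y - dist x y < 3*t*dist x y := by
      nlinarith [mul_nonneg ht0.le heq0,
        mul_nonneg (by linarith : (0:ℝ) ≤ 1/128 - t) heq0]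
    have hminq : min (dist q x) (dist q y) < 3*ρ/8 := by
      by_contra hcon
      push_neg at hcon
      have h1 := mul_le_mul_of_nonneg_left hcon hθ0.le
      nlinarith
    -- q must be close to y
    have hvqr : dist q y ≤ 3*ρ/8 := by
      by_contra hvq
      push_neg at hvq
      have huq : dist q x < 3*ρ/8 := by
        rcases min_lt_iff.mp hminq with h | h
        · exact h
        · linarith
      have hvq2 : dist x y/2 ≤ dist q y := by linarith
      have hmaxq : max 0 (dist q y - dist x y/2) = dist q y - dist x y/2 :=
        max_eq_right (by linarith)
      rw [hmaxq] at hCK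
      have hminuq : min (dist q x) (dist q y) = dist q x := min_eq_left (by linarith)
      rw [hminuq] at hnzq
      have h1 : (1+2*t)*(θ*dist q x) ≤ (1+2*t)*(dist q x + dist q y - dist x y) :=
        mul_le_mul_of_nonneg_left hnzq (by linarith)
      nlinarith [mul_nonneg (by linarith : (0:ℝ) ≤ θ - 4*t) huqx,
        mul_nonneg (mul_nonneg ht0.le hθ0.le) huqx]
    have hmax0 : max 0 (dist q y - dist x y/2) = 0 := max_eq_left (by linarith)
    rw [hmax0] at hq
    by_cases hvp : dist p y ≤ dist x y/2
    · left
      have hmaxp : max 0 (dist p y - dist x y/2) = 0 := max_eq_left (by linarith)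
      have hple : F0val x y t p ≤
          (1-2*t)*dist p y + 4*t*max 0 (dist p y - dist x y/2) := min_le_right _ _
      rw [hmaxp] at hple
      rw [hq]
      have h2 := mul_le_mul_of_nonneg_left hvv1 (by linarith : (0:ℝ) ≤ 1-2*t)
      nlinarith
    · push_neg at hvp
      by_cases hupρ : dist p x ≤ ρ
      · right
        refine ⟨hupρ, hvqr, ?_⟩
        have hple : F0val x y t p ≤ dist x y - (1-2*t)*dist p x := min_le_left _ _
        rw [hq]
        have hminp : min (dist p x) (dist p y) = dist p x := min_eq_left (by linarith)
        rw [hminp] at hnzp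
        have hminq2 : min (dist q x) (dist q y) = dist q y := min_eq_right (by linarith)
        rw [hminq2] at hnzq
        nlinarith [mul_nonneg (by linarith : (0:ℝ) ≤ θ - 4*t)
          (by linarith : (0:ℝ) ≤ dist p x + dist q y)]
      · push_neg at hupρ
        left
        have hple : F0val x y t p ≤ dist x y - (1-2*t)*dist p x := min_le_left _ _
        rw [hq]
        have hminp : ρ ≤ min (dist p x) (dist p y) := le_min (le_of_lt hupρ) (by linarith)
        have hep : θ*ρ ≤ dist p x + dist p y - dist x y :=
          le_trans (mul_le_mul_of_nonneg_left hminp hθ0.le) hnzp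
        have h1 := mul_le_mul_of_nonneg_left hvv1 (by linarith : (0:ℝ) ≤ 1-2*t)
        nlinarith [mul_le_mul_of_nonneg_left hep (by linarith : (0:ℝ) ≤ 1-2*t),
          mul_nonneg ht0.le (by linarith : (0:ℝ) ≤ dist x y)]


set_option maxHeartbeats 2000000 in
theorem denting_of_nonZ (z x y : M) (hxy : x ≠ y) (θ : ℝ) (hθ0 : 0 < θ) (hθ1 : θ ≤ 1/2)
    (hnz : ∀ p : M, θ * min (dist p x) (dist p y) ≤ dist p x + dist p y - dist x y) :
    IsDentingPoint (mol M z x y) := by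
  have hd0 : 0 < dist x y := dist_pos.mpr hxy
  have hmolnorm : ‖mol M z x y‖ ≤ 1 := by
    have h : ‖mol M z x y‖ = ‖molecule M z x y‖ := rfl
    rw [h]; exact norm_molecule_le x y
  refine ⟨hmolnorm, ?_⟩
  intro ε hε
  set ε' : ℝ := min (ε/5) 1 with hε'def
  have hε'0 : 0 < ε' := lt_min (by linarith) one_pos
  have hε'1 : ε' ≤ 1 := min_le_right _ _
  set ρ : ℝ := ε' * dist x y / 8 with hρdef
  have hρ0 : 0 < ρ := by positivity
  have hρd : ρ ≤ dist x y / 8 := by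
    rw [hρdef]
    rw [div_le_div_iff_of_pos_right (by norm_num)]
    nlinarith
  set t : ℝ := θ * ρ / (8 * dist x y) with htdef
  have ht0 : 0 < t := by positivity
  have ht128 : t ≤ 1/128 := by
    rw [htdef, div_le_iff₀ (by positivity)]
    nlinarith
  -- basic slope bound
  have hlipF : ∀ p q : M, F0val x y t p - F0val x y t q ≤ dist p q := by
    intro p q
    rcases core_cases x y θ ρ t hθ0 hθ1 hρ0 hρd hd0 htdef hnz p q with h | ⟨_, _, h⟩
    · have h2 : (1-2*t) * dist p q ≤ 1 * dist p q :=
        mul_le_mul_of_nonneg_right (by linarith) dist_nonneg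
      linarith
    · exact h
  have hlip1 : LipschitzWith 1 (fun p => F0val x y t p - F0val x y t z) := by
    rw [lipschitzWith_iff_dist_le_mul]
    intro a b
    rw [Real.dist_eq]
    have h1 := hlipF a b
    have h2 := hlipF b a
    rw [dist_comm b a] at h2
    rw [abs_sub_le_iff]
    constructor
    · simpa using h1
    · simpa using h2
  set fhat : ↥(Lip0 M z) :=
    ⟨fun p => F0val x y t p - F0val x y t z, ⟨1, hlip1⟩, by simp⟩ with hfhatdef
  have hfhat_co : ∀ p : M, (fhat : M → ℝ) p = F0val x y t p - F0val x y t z := fun _ => rfl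
  have hfnorm : ‖fhat‖ ≤ 1 := by
    apply Lip0.norm_le_of_forall zero_le_one
    intro p q
    rw [hfhat_co, hfhat_co, one_mul]
    have := hlipF p q
    linarith
  -- values at x and y
  have hF0x : F0val x y t x = dist x y := by
    have h1 : max 0 (dist x y - dist x y/2) = dist x y - dist x y/2 :=
      max_eq_right (by linarith)
    have h2 : dist x y - (1-2*t)*dist x x = dist x y := by rw [dist_self]; ring
    have h3 : (1-2*t)*dist x y + 4*t*max 0 (dist x y - dist x y/2) = dist x y := by
      rw [h1]; ring
    simp only [F0val]
    rw [h2, h3, min_self]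
  have hF0y : F0val x y t y = 0 := by
    have h1 : max 0 (dist y y - dist x y/2) = 0 := by
      rw [dist_self]; exact max_eq_left (by linarith)
    have h2 : (1-2*t)*dist y y + 4*t*max 0 (dist y y - dist x y/2) = 0 := by
      rw [h1, dist_self]; ring
    have h3 : dist x y - (1-2*t)*dist y x = 2*t*dist x y := by
      rw [dist_comm y x]; ring
    simp only [F0val]
    rw [h2, h3]
    exact min_eq_right (by nlinarith)
  have hfxy : (fhat : M → ℝ) x - (fhat : M → ℝ) y = dist x y := by
    rw [hfhat_co, hfhat_co, hF0x, hF0y]; ring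
  -- the key norm estimate
  have hnormB : ∀ g : ↥(Lip0 M z), ‖g‖ ≤ 1 →
      ‖fhat + t • g‖ ≤ 1 + t * (((g:M→ℝ) x - (g:M→ℝ) y)/dist x y) + t*ε' := by
    intro g hg
    set mg : ℝ := ((g:M→ℝ) x - (g:M→ℝ) y)/dist x y with hmgdef
    have hmgd : mg * dist x y = (g:M→ℝ) x - (g:M→ℝ) y := by
      rw [hmgdef]; field_simp
    have hmg1 : |mg| ≤ 1 := by
      have h1 := Lip0.dist_bound g x y
      have h2 := Lip0.dist_bound g y x
      rw [dist_comm y x] at h2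
      rw [abs_le]
      constructor
      · rw [hmgdef, le_div_iff₀ hd0]
        nlinarith [dist_nonneg (x := x) (y := y)]
      · rw [hmgdef, div_le_iff₀ hd0]
        nlinarith [dist_nonneg (x := x) (y := y)]
    obtain ⟨hmgl, hmgu⟩ := abs_le.mp hmg1
    have hB0 : (0:ℝ) ≤ 1 + t*mg + t*ε' := by nlinarith
    apply Lip0.norm_le_of_forall hB0
    intro p q
    have hco : ((fhat + t • g : ↥(Lip0 M z)) : M → ℝ) p - ((fhat + t • g : ↥(Lip0 M z)) : M → ℝ) q
        = (F0val x y t p - F0val x y t q) + t * ((g:M→ℝ) p - (g:M→ℝ) q) := by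
      have e1 : ((fhat + t • g : ↥(Lip0 M z)) : M → ℝ) p = (fhat : M → ℝ) p + t * (g:M→ℝ) p := rfl
      have e2 : ((fhat + t • g : ↥(Lip0 M z)) : M → ℝ) q = (fhat : M → ℝ) q + t * (g:M→ℝ) q := rfl
      rw [e1, e2, hfhat_co, hfhat_co]; ring
    rw [hco]
    have hgpq : (g:M→ℝ) p - (g:M→ℝ) q ≤ dist p q := by
      have h := Lip0.dist_bound g p q
      nlinarith [dist_nonneg (x := p) (y := q)]
    rcases core_cases x y θ ρ t hθ0 hθ1 hρ0 hρd hd0 htdef hnz p q with h | ⟨h1, h2, h3⟩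
    · have hB : 1 - t ≤ 1 + t*mg + t*ε' := by nlinarith
      have h4 := mul_le_mul_of_nonneg_right hB (dist_nonneg (x := p) (y := q))
      have h5 := mul_le_mul_of_nonneg_left hgpq ht0.le
      nlinarith [dist_nonneg (x := p) (y := q)]
    · -- good pair: p near x, q near y
      have hgx : (g:M→ℝ) p - (g:M→ℝ) x ≤ dist p x := by
        have h := Lip0.dist_bound g p x
        nlinarith [dist_nonneg (x := p) (y := x)]
      have hgy : (g:M→ℝ) y - (g:M→ℝ) q ≤ dist q y := by
        have h := Lip0.dist_bound g y q
        rw [dist_comm y q] at h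
        nlinarith [dist_nonneg (x := q) (y := y)]
      have hgpq2 : (g:M→ℝ) p - (g:M→ℝ) q ≤ mg * dist x y + (dist p x + dist q y) := by
        rw [hmgd]; linarith
      have ha : dist x y - dist p q ≤ dist p x + dist q y := by
        have h := dist_triangle4 x p q y
        rw [dist_comm x p] at h
        linarith
      have hb : dist p q - dist x y ≤ dist p x + dist q y := by
        have h := dist_triangle4 p x y q
        rw [dist_comm y q] at h
        linarith
      have hσhalf : dist x y/2 ≤ dist p q := by
        -- σ ≥ d − (ρ + 3ρ/8) ≥ d − 11d/64
        linarith [hρd]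
      have hstep1 : mg*(dist x y - dist p q) ≤ dist p x + dist q y := by
        nlinarith [mul_nonneg (by linarith : (0:ℝ) ≤ 1 - mg)
            (by linarith : (0:ℝ) ≤ dist p x + dist q y - (dist x y - dist p q)),
          mul_nonneg (by linarith : (0:ℝ) ≤ 1 + mg)
            (by linarith : (0:ℝ) ≤ dist p x + dist q y + (dist x y - dist p q))]
      have hsmall : 2*(dist p x + dist q y) ≤ ε' * dist p q := by
        have hh := mul_le_mul_of_nonneg_left hσhalf hε'0.le
        rw [hρdef] at h1 h2
        nlinarith
      have hgood : mg*(dist x y) + (dist p x + dist q y) ≤ mg*(dist p q) + ε' * dist p q := by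
        nlinarith
      have h6 := mul_le_mul_of_nonneg_left hgood ht0.le
      have h7 := mul_le_mul_of_nonneg_left hgpq2 ht0.le
      have hexp : (1 + t*mg + t*ε') * dist p q
          = dist p q + t*(mg*dist p q) + t*(ε'*dist p q) := by ring
      rw [hexp]
      nlinarith
  -- slice estimate
  set α : ℝ := t * ε' with hαdef
  have hα0 : 0 < α := by positivity
  have hslice : ∀ μ : Dual ℝ ↥(Lip0 M z), ‖μ‖ ≤ 1 → 1 - α < μ fhat →
      ‖μ - molecule M z x y‖ ≤ 2*ε' := by
    intro μ hμ hμf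
    have hunit : ∀ h : ↥(Lip0 M z), ‖h‖ ≤ 1 → μ h - molecule M z x y h ≤ 2*ε' := by
      intro h hh
      set mh : ℝ := ((h:M→ℝ) x - (h:M→ℝ) y)/dist x y with hmhdef
      have hb := hnormB h hh
      have h1 : μ (fhat + t • h) ≤ ‖fhat + t • h‖ := by
        calc μ (fhat + t • h) ≤ |μ (fhat + t • h)| := le_abs_self _
          _ = ‖μ (fhat + t • h)‖ := (Real.norm_eq_abs _).symm
          _ ≤ ‖μ‖ * ‖fhat + t • h‖ := μ.le_opNorm _
          _ ≤ 1 * ‖fhat + t • h‖ :=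
              mul_le_mul_of_nonneg_right hμ (norm_nonneg _)
          _ = ‖fhat + t • h‖ := one_mul _
      have h2 : μ fhat + t * μ h ≤ ‖fhat + t • h‖ := by
        rw [map_add, map_smul] at h1
        simpa [smul_eq_mul] using h1
      have hmol : molecule M z x y h = mh := by
        rw [molecule_apply, hmhdef]
        rw [inv_mul_eq_div]
      have h3 : t * μ h ≤ t * (mh + 2*ε') := by
        have : t * μ h ≤ ‖fhat + t • h‖ - μ fhat := by linarith
        have h4 : ‖fhat + t • h‖ - μ fhat < t * mh + t*ε' + α := by
          rw [hmhdef] at *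
          linarith [hb]
        rw [hαdef] at h4
        nlinarith
      have h5 : μ h ≤ mh + 2*ε' := le_of_mul_le_mul_left (by linarith) ht0
      rw [hmol]
      linarith
    apply ContinuousLinearMap.opNorm_le_bound _ (by positivity)
    intro g
    rcases eq_or_ne ‖g‖ 0 with hg0 | hg0
    · have hgz : g = 0 := norm_eq_zero.mp hg0
      simp [hgz]
    · have hgpos : 0 < ‖g‖ := lt_of_le_of_ne (norm_nonneg g) (Ne.symm hg0)
      set g' : ↥(Lip0 M z) := ‖g‖⁻¹ • g with hg'def
      have hg'1 : ‖g'‖ ≤ 1 := by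
        rw [hg'def, norm_smul, norm_inv, norm_norm, inv_mul_cancel₀ hg0]
      have hp := hunit g' hg'1
      have hm := hunit (-g') (by rw [norm_neg]; exact hg'1)
      have hmneg : μ (-g') - molecule M z x y (-g') = -(μ g' - molecule M z x y g') := by
        rw [map_neg, map_neg]; ring
      rw [hmneg] at hm
      have habs : |μ g' - molecule M z x y g'| ≤ 2*ε' := abs_le.mpr ⟨by linarith, hp⟩
      have hgg : g = ‖g‖ • g' := by
        rw [hg'def, smul_smul, mul_inv_cancel₀ hg0, one_smul]
      have hμs : μ g = ‖g‖ * μ g' := by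
        conv_lhs => rw [hgg]
        rw [map_smul, smul_eq_mul]
      have hms : molecule M z x y g = ‖g‖ * molecule M z x y g' := by
        conv_lhs => rw [hgg]
        rw [map_smul, smul_eq_mul]
      have hsub : (μ - molecule M z x y) g = μ g - molecule M z x y g := rfl
      have h4 : (μ - molecule M z x y) g = ‖g‖ * (μ g' - molecule M z x y g') := by
        rw [hsub, hμs, hms]; ring
      rw [h4, Real.norm_eq_abs, abs_mul, abs_of_nonneg (norm_nonneg g), mul_comm (2*ε') ‖g‖]
      exact mul_le_mul_of_nonneg_left habs (norm_nonneg g)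
  -- the slicing functional on the free space
  set φ₀ : ↥(FreeSpace M z) →ₗ[ℝ] ℝ :=
    { toFun := fun μ => (μ : Dual ℝ ↥(Lip0 M z)) fhat
      map_add' := fun μ ν => rfl
      map_smul' := fun c μ => rfl } with hφ₀def
  have hφ₀bound : ∀ μ : ↥(FreeSpace M z), ‖φ₀ μ‖ ≤ 1 * ‖μ‖ := by
    intro μ
    have h1 : ‖(μ : Dual ℝ ↥(Lip0 M z)) fhat‖ ≤ ‖(μ : Dual ℝ ↥(Lip0 M z))‖ * ‖fhat‖ :=
      ContinuousLinearMap.le_opNorm _ _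
    have h2 : ‖(μ : Dual ℝ ↥(Lip0 M z))‖ = ‖μ‖ := rfl
    rw [h2] at h1
    calc ‖φ₀ μ‖ = ‖(μ : Dual ℝ ↥(Lip0 M z)) fhat‖ := rfl
      _ ≤ ‖μ‖ * ‖fhat‖ := h1
      _ ≤ ‖μ‖ * 1 := mul_le_mul_of_nonneg_left hfnorm (norm_nonneg μ)
      _ = 1 * ‖μ‖ := by ring
  letI : NormedAddCommGroup ↥(FreeSpace M z) := inferInstance
  letI : NormedSpace ℝ ↥(FreeSpace M z) := inferInstance
  set φ : NormedSpace.Dual ℝ ↥(FreeSpace M z) := LinearMap.mkContinuous φ₀ 1 hφ₀bound with hφdef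
  have hφ_apply : ∀ μ : ↥(FreeSpace M z), φ μ = (μ : Dual ℝ ↥(Lip0 M z)) fhat := fun _ => rfl
  have hφmol : φ (mol M z x y) = 1 := by
    rw [hφ_apply]
    have h1 : ((mol M z x y : ↥(FreeSpace M z)) : Dual ℝ ↥(Lip0 M z)) = molecule M z x y := rfl
    rw [h1, molecule_apply, hfxy]
    field_simp
  have hφnorm : ‖φ‖ = 1 := by
    apply le_antisymm
    · exact LinearMap.mkContinuous_norm_le φ₀ zero_le_one hφ₀bound
    · have h1 : (1:ℝ) = ‖φ (mol M z x y)‖ := by rw [hφmol]; simp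
      have h2 : ‖φ (mol M z x y)‖ ≤ ‖φ‖ * ‖mol M z x y‖ := ContinuousLinearMap.le_opNorm _ _
      have h3 : ‖φ‖ * ‖mol M z x y‖ ≤ ‖φ‖ * 1 :=
        mul_le_mul_of_nonneg_left hmolnorm (norm_nonneg φ)
      rw [mul_one] at h3
      linarith
  refine ⟨φ, α, hφnorm, hα0, by rw [hφmol]; linarith, ?_⟩
  -- diameter estimate
  have hdistw : ∀ w₁ w₂ : ↥(FreeSpace M z),
      ‖w₁‖ ≤ 1 ∧ 1 - α < φ w₁ → ‖w₂‖ ≤ 1 ∧ 1 - α < φ w₂ → dist w₁ w₂ ≤ 4*ε' := by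
    intro w₁ w₂ hw₁ hw₂
    have e1 : ‖(w₁ : Dual ℝ ↥(Lip0 M z)) - molecule M z x y‖ ≤ 2*ε' := by
      refine hslice (w₁ : Dual ℝ ↥(Lip0 M z)) hw₁.1 ?_
      have h := hw₁.2
      rw [hφ_apply] at h
      exact h
    have e2 : ‖(w₂ : Dual ℝ ↥(Lip0 M z)) - molecule M z x y‖ ≤ 2*ε' := by
      refine hslice (w₂ : Dual ℝ ↥(Lip0 M z)) hw₂.1 ?_
      have h := hw₂.2
      rw [hφ_apply] at h
      exact h
    have e3 : dist w₁ w₂ = ‖(w₁ : Dual ℝ ↥(Lip0 M z)) - (w₂ : Dual ℝ ↥(Lip0 M z))‖ := by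
      rw [Subtype.dist_eq, dist_eq_norm]
    rw [e3]
    have e4 : (w₁ : Dual ℝ ↥(Lip0 M z)) - (w₂ : Dual ℝ ↥(Lip0 M z))
        = ((w₁ : Dual ℝ ↥(Lip0 M z)) - molecule M z x y)
          - ((w₂ : Dual ℝ ↥(Lip0 M z)) - molecule M z x y) := by abel
    rw [e4]
    calc ‖_ - _‖ ≤ ‖(w₁ : Dual ℝ ↥(Lip0 M z)) - molecule M z x y‖
          + ‖(w₂ : Dual ℝ ↥(Lip0 M z)) - molecule M z x y‖ := norm_sub_le _ _
      _ ≤ 4*ε' := by linarith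
  have hdiam : Metric.diam {w : ↥(FreeSpace M z) | ‖w‖ ≤ 1 ∧ 1 - α < φ w} ≤ 4*ε' := by
    apply Metric.diam_le_of_forall_dist_le (by positivity)
    intro w₁ hw₁ w₂ hw₂
    exact hdistw w₁ w₂ hw₁ hw₂
  have hfin : 4*ε' < ε := by
    have : ε' ≤ ε/5 := min_le_left _ _
    linarith
  linarith

end Denting

/-- Lemma 2.6. Let `M` be complete, `u, v ∈ M` and `r, s, δ > 0` with
`r + s < d(u,v)` be such that `[u,v]_δ ⊆ B(u,r) ∪ B(v,s)`. Then there are `x ∈ B(u,r)` and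
`y ∈ B(v,s)`, `x ≠ y`, such that `m_{xy}` is a denting point of `B_{F(M)}` and
`d(u,x) + d(v,y) + d(x,y) < d(u,v) + δ`. -/
theorem statement4 {M : Type*} [MetricSpace M] [CompleteSpace M] (z : M)
    (u v : M) (r s δ : ℝ) (hr : 0 < r) (hs : 0 < s) (hδ : 0 < δ)
    (hrs : r + s < dist u v)
    (hseg : {p : M | dist u p + dist v p < dist u v + δ} ⊆
      closedBall u r ∪ closedBall v s) :
    ∃ x ∈ closedBall u r, ∃ y ∈ closedBall v s, x ≠ y ∧
      IsDentingPoint (mol M z x y) ∧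
      dist u x + dist v y + dist x y < dist u v + δ := by
  obtain ⟨x, hx, y, hy, hxy, hbud, θ, hθ0, hθ1, hnz⟩ :=
    exists_nonZ_pair u v r s δ hr hs hδ hrs hseg
  exact ⟨x, hx, y, hy, hxy, denting_of_nonZ z x y hxy θ hθ0 hθ1 hnz, hbud⟩
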